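/- Tail mutual information vanishes (Lemma 7): let X be a real random variable and Z ~ N(0, σ²), σ > 0, independent of X, with I(X; X+Z) < ∞. Then P(|X| > b)·I(X; X+Z given |X| > b) → 0 as b → ∞, where I(X; X+Z | |X| > b) denotes the mutual information computed under the conditional law given the event {|X| > b}. -/

import Mathlib

open MeasureTheory ProbabilityTheory Real

/-- Mutual information (natural log) between two random variables, as the relative entropy
of the joint law with respect to the product of the marginals. -/
noncomputable def miNat {Ω α β : Type*} [MeasurableSpace Ω] [MeasurableSpace α]
    [MeasurableSpace β] (μ : Measure Ω) (X : Ω → α) (Y : Ω → β) : ℝ :=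
  ∫ p, Real.log
      (((μ.map fun ω => (X ω, Y ω)).rnDeriv ((μ.map X).prod (μ.map Y)) p).toReal)
    ∂(μ.map fun ω => (X ω, Y ω))

open scoped ENNReal NNReal

section AuxLemmas

variable {α β : Type*} [MeasurableSpace α] [MeasurableSpace β]

lemma auxSmulProd (c : ℝ≥0∞) (μ : Measure α) (ν : Measure β) [SFinite μ] [SFinite ν] :
    (c • μ).prod ν = c • (μ.prod ν) := by
  ext s hs
  rw [Measure.prod_apply hs, Measure.smul_apply, Measure.prod_apply hs, smul_eq_mul,
    lintegral_smul_measure, smul_eq_mul]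

lemma auxProdWithDensity (μ : Measure α) (ν : Measure β) [SigmaFinite μ] [SigmaFinite ν]
    {f : α → ℝ≥0∞} {g : β → ℝ≥0∞} (hf : Measurable f) (hg : Measurable g)
    [SigmaFinite (μ.withDensity f)] [SigmaFinite (ν.withDensity g)] :
    (μ.withDensity f).prod (ν.withDensity g)
      = (μ.prod ν).withDensity (fun p => f p.1 * g p.2) := by
  refine Measure.prod_eq fun s t hs ht => ?_
  rw [withDensity_apply _ (hs.prod ht), ← Measure.prod_restrict,
    lintegral_prod_mul hf.aemeasurable hg.aemeasurable,
    withDensity_apply _ hs, withDensity_apply _ ht]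

end AuxLemmas

lemma auxKey {Ω : Type*} [MeasureSpace Ω] [IsProbabilityMeasure (ℙ : Measure Ω)]
    (X Y : Ω → ℝ) (hX : Measurable X) (hY : Measurable Y)
    (hAC : ((ℙ : Measure Ω).map fun ω => (X ω, Y ω)) ≪
      (((ℙ : Measure Ω).map X).prod ((ℙ : Measure Ω).map Y)))
    (hφint : Integrable
      (fun p => Real.log
        ((((ℙ : Measure Ω).map fun ω => (X ω, Y ω)).rnDeriv
          (((ℙ : Measure Ω).map X).prod ((ℙ : Measure Ω).map Y)) p).toReal))
      ((ℙ : Measure Ω).map fun ω => (X ω, Y ω)))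
    {T : Set ℝ} (hT : MeasurableSet T) :
    min 0 ((∫ p in T ×ˢ (Set.univ : Set ℝ),
        Real.log ((((ℙ : Measure Ω).map fun ω => (X ω, Y ω)).rnDeriv
          (((ℙ : Measure Ω).map X).prod ((ℙ : Measure Ω).map Y)) p).toReal)
        ∂((ℙ : Measure Ω).map fun ω => (X ω, Y ω)))
        + (ℙ (X ⁻¹' T)).toReal * Real.log (ℙ (X ⁻¹' T)).toReal)
      ≤ (ℙ (X ⁻¹' T)).toReal * miNat (ℙ[|X ⁻¹' T]) X Y
    ∧ (ℙ (X ⁻¹' T)).toReal * miNat (ℙ[|X ⁻¹' T]) X Y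
      ≤ max 0 (∫ p in T ×ˢ (Set.univ : Set ℝ),
        Real.log ((((ℙ : Measure Ω).map fun ω => (X ω, Y ω)).rnDeriv
          (((ℙ : Measure Ω).map X).prod ((ℙ : Measure Ω).map Y)) p).toReal)
        ∂((ℙ : Measure Ω).map fun ω => (X ω, Y ω))) := by
  classical
  set ν : Measure (ℝ × ℝ) := (ℙ : Measure Ω).map (fun ω => (X ω, Y ω)) with hνdef
  set μX : Measure ℝ := (ℙ : Measure Ω).map X with hμXdef
  set μY : Measure ℝ := (ℙ : Measure Ω).map Y with hμYdef
  have hXY : Measurable fun ω => (X ω, Y ω) := hX.prodMk hY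
  haveI : IsProbabilityMeasure ν := Measure.isProbabilityMeasure_map hXY.aemeasurable
  haveI : IsProbabilityMeasure μX := Measure.isProbabilityMeasure_map hX.aemeasurable
  haveI : IsProbabilityMeasure μY := Measure.isProbabilityMeasure_map hY.aemeasurable
  set pr : Measure (ℝ × ℝ) := μX.prod μY with hprdef
  set d : ℝ × ℝ → ℝ≥0∞ := ν.rnDeriv pr with hddef
  set φ : ℝ × ℝ → ℝ := fun p => Real.log (d p).toReal with hφdef
  set A : Set Ω := X ⁻¹' T with hAdef
  set S : Set (ℝ × ℝ) := T ×ˢ (Set.univ : Set ℝ) with hSdef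
  have hAmeas : MeasurableSet A := hX hT
  have hSmeas : MeasurableSet S := hT.prod MeasurableSet.univ
  set P : ℝ≥0∞ := ℙ A with hPdef
  set Dv : ℝ := ∫ p in S, φ p ∂ν with hDdef
  by_cases hP0 : P = 0
  · have h0 : P.toReal = 0 := by rw [hP0]; simp
    refine ⟨?_, ?_⟩
    · calc min 0 (Dv + P.toReal * Real.log P.toReal) ≤ 0 := min_le_left _ _
        _ = P.toReal * miNat (ℙ[|A]) X Y := by rw [h0, zero_mul]
    · calc P.toReal * miNat (ℙ[|A]) X Y = 0 := by rw [h0, zero_mul]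
        _ ≤ max 0 Dv := le_max_left _ _
  -- main case
  have hP1 : P ≠ ∞ := measure_ne_top _ _
  have hPinv0 : P⁻¹ ≠ 0 := ENNReal.inv_ne_zero.mpr hP1
  have hPinv1 : P⁻¹ ≠ ∞ := ENNReal.inv_ne_top.mpr hP0
  haveI hprob : IsProbabilityMeasure (ℙ[|A]) := cond_isProbabilityMeasure hP0
  set μb : Measure Ω := ℙ[|A] with hμbdef
  have hcond : μb = P⁻¹ • (ℙ : Measure Ω).restrict A := rfl
  set νb : Measure (ℝ × ℝ) := μb.map (fun ω => (X ω, Y ω)) with hνbdef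
  set qb : Measure ℝ := μb.map Y with hqbdef
  set πXb : Measure ℝ := μb.map X with hπXbdef
  haveI : IsProbabilityMeasure νb := Measure.isProbabilityMeasure_map hXY.aemeasurable
  haveI : IsProbabilityMeasure qb := Measure.isProbabilityMeasure_map hY.aemeasurable
  haveI : IsProbabilityMeasure πXb := Measure.isProbabilityMeasure_map hX.aemeasurable
  have hA_pre : A = (fun ω => (X ω, Y ω)) ⁻¹' S := by
    ext ω; simp [hSdef, hAdef]
  have hνb : νb = P⁻¹ • ν.restrict S := by
    rw [hνbdef, hcond, Measure.map_smul, hνdef, Measure.restrict_map hXY hSmeas, ← hA_pre]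
  have hπXb : πXb = P⁻¹ • μX.restrict T := by
    rw [hπXbdef, hcond, Measure.map_smul, hμXdef, Measure.restrict_map hX hT]
  set m' : Measure (ℝ × ℝ) := (μX.restrict T).prod qb with hm'def
  have hπb_smul : πXb.prod qb = P⁻¹ • m' := by
    rw [hπXb, hm'def, auxSmulProd]
  -- the density of qb wrt μY
  set r : ℝ → ℝ≥0∞ := qb.rnDeriv μY with hrdef
  have hrm : Measurable r := Measure.measurable_rnDeriv _ _
  have hqb_apply : ∀ s : Set ℝ, MeasurableSet s → qb s = P⁻¹ * ℙ (Y ⁻¹' s ∩ A) := by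
    intro s hs
    rw [hqbdef, Measure.map_apply hY hs, hcond, Measure.smul_apply, smul_eq_mul,
      Measure.restrict_apply (hY hs)]
  have hqac : qb ≪ μY := by
    refine Measure.AbsolutelyContinuous.mk fun s hs h0 => ?_
    have hYs : ℙ (Y ⁻¹' s) = 0 := by rwa [hμYdef, Measure.map_apply hY hs] at h0
    rw [hqb_apply s hs, measure_mono_null Set.inter_subset_left hYs, mul_zero]
  have hq_eq : μY.withDensity r = qb := Measure.withDensity_rnDeriv_eq qb μY hqac
  have hrle : r ≤ᵐ[μY] fun _ => P⁻¹ := by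
    refine ae_le_of_forall_setLIntegral_le_of_sigmaFinite hrm fun s hs _ => ?_
    have h1 : ∫⁻ y in s, r y ∂μY = qb s := by rw [← withDensity_apply r hs, hq_eq]
    have h2 : ∫⁻ _ in s, P⁻¹ ∂μY = P⁻¹ * μY s := setLIntegral_const _ _
    rw [h1, h2, hqb_apply s hs, hμYdef, Measure.map_apply hY hs]
    exact mul_le_mul_right (measure_mono Set.inter_subset_left) _
  -- the singular set where r vanishes
  set N : Set ℝ := {y | r y = 0} with hNdef
  have hNmeas : MeasurableSet N := hrm (measurableSet_singleton 0)
  have hqbN : qb N = 0 := by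
    rw [← hq_eq, withDensity_apply r hNmeas]
    have : ∀ᵐ y ∂(μY.restrict N), r y = 0 := by
      refine (ae_restrict_iff' hNmeas).mpr (ae_of_all _ fun y hy => hy)
    rw [lintegral_congr_ae this, lintegral_zero]
  have hνTN : ν (T ×ˢ N) = 0 := by
    have hmeas : MeasurableSet (T ×ˢ N) := hT.prod hNmeas
    have h1 : ν (T ×ˢ N) = ℙ (Y ⁻¹' N ∩ A) := by
      rw [hνdef, Measure.map_apply hXY hmeas]
      congr 1
      ext ω
      simp [hAdef, Set.mem_prod, and_comm]
    have h2 : ℙ (Y ⁻¹' N ∩ A) = 0 := by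
      have := hqb_apply N hNmeas
      rw [hqbN] at this
      have := this.symm
      rcases mul_eq_zero.mp this with h | h
      · exact absurd h hPinv0
      · exact h
    rw [h1, h2]
  -- m' as a density over pr
  have hd_meas : Measurable d := Measure.measurable_rnDeriv _ _
  set k : ℝ × ℝ → ℝ≥0∞ := fun p => T.indicator 1 p.1 * r p.2 with hkdef
  have hkm : Measurable k :=
    ((measurable_one.indicator hT).comp measurable_fst).mul (hrm.comp measurable_snd)
  have hm'wd : m' = pr.withDensity k := by
    rw [hm'def, ← hq_eq, ← withDensity_indicator_one hT]
    haveI : SigmaFinite (μX.withDensity (T.indicator 1)) := by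
      rw [withDensity_indicator_one hT]; infer_instance
    haveI : SigmaFinite (μY.withDensity r) := by
      rw [hq_eq]; infer_instance
    rw [auxProdWithDensity μX μY (measurable_one.indicator hT) hrm, hprdef]
  set h : ℝ × ℝ → ℝ≥0∞ := fun p => d p * (r p.2)⁻¹ with hhdef
  have hhm : Measurable h := hd_meas.mul ((hrm.comp measurable_snd).inv)
  -- the key withDensity identity
  have hkey : ν.restrict S = m'.withDensity h := by
    rw [hm'wd, ← withDensity_mul pr hkm hhm]
    have hae : (fun p => k p * h p) =ᵐ[pr] S.indicator d := by
      -- a.e. facts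
      have hfin : ∀ᵐ p ∂pr, r p.2 ≠ ∞ := by
        have hB : μY {y | r y = ∞} = 0 := by
          have h2 := Measure.rnDeriv_lt_top qb μY
          rw [← hrdef, ae_iff] at h2
          simpa only [not_lt, top_le_iff] using h2
        have hpre : Prod.snd ⁻¹' {y | r y = ∞} = (Set.univ : Set ℝ) ×ˢ {y | r y = ∞} := by
          ext p; simp
        have hBmeas : MeasurableSet {y | r y = ∞} := hrm (measurableSet_singleton ∞)
        have : pr (Prod.snd ⁻¹' {y | r y = ∞}) = 0 := by
          rw [hpre, hprdef, Measure.prod_prod, hB, mul_zero]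
        exact (ae_iff).mpr (by simpa using this)
      have hzero : ∀ᵐ p ∂pr, p ∈ T ×ˢ N → d p = 0 := by
        have hle : ∫⁻ p in T ×ˢ N, d p ∂pr ≤ ν (T ×ˢ N) :=
          Measure.setLIntegral_rnDeriv_le _
        rw [hνTN] at hle
        exact (setLIntegral_eq_zero_iff (hT.prod hNmeas) hd_meas).mp (le_antisymm hle zero_le)
      filter_upwards [hfin, hzero] with p hp1 hp2
      by_cases hpT : p.1 ∈ T
      · have hindS : p ∈ S := by simp [hSdef, hpT]
        rw [Set.indicator_of_mem hindS]
        by_cases hr0 : r p.2 = 0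
        · have hd0 : d p = 0 := hp2 ⟨hpT, hr0⟩
          simp [hkdef, hhdef, hd0, Set.indicator_of_mem hpT]
        · rw [hkdef, hhdef]
          simp only [Set.indicator_of_mem hpT, Pi.one_apply, one_mul]
          calc r p.2 * (d p * (r p.2)⁻¹) = d p * (r p.2 * (r p.2)⁻¹) := by ring
            _ = d p * 1 := by rw [ENNReal.mul_inv_cancel hr0 hp1]
            _ = d p := mul_one _
      · have hindS : p ∉ S := by simp [hSdef, hpT]
        rw [Set.indicator_of_notMem hindS, hkdef]
        simp [Set.indicator_of_notMem hpT]
    rw [withDensity_congr_ae (show (k * h) =ᵐ[pr] S.indicator d from hae),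
      withDensity_indicator hSmeas, hddef, ← restrict_withDensity hSmeas,
      Measure.withDensity_rnDeriv_eq ν pr hAC]
  -- absolute continuity of the conditional measures
  have hνS_ac : ν.restrict S ≪ m' := by
    rw [hkey]; exact withDensity_absolutelyContinuous _ _
  have hνb_ac : νb ≪ m' := by
    rw [hνb]; exact (Measure.smul_absolutelyContinuous (c := P⁻¹) (μ := ν.restrict S)).trans hνS_ac
  have hνb_acν : νb ≪ ν := by
    rw [hνb]
    exact (Measure.smul_absolutelyContinuous (c := P⁻¹) (μ := ν.restrict S)).trans Measure.restrict_le_self.absolutelyContinuous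
  have hrn1 : (ν.restrict S).rnDeriv m' =ᵐ[m'] h := by
    rw [hkey]; exact Measure.rnDeriv_withDensity m' hhm
  have hrn2 : νb.rnDeriv (πXb.prod qb) =ᵐ[m'] h := by
    rw [hπb_smul]
    have e1 : νb.rnDeriv (P⁻¹ • m') =ᵐ[m'] (P⁻¹)⁻¹ • νb.rnDeriv m' :=
      Measure.rnDeriv_smul_right_of_ne_top νb m' hPinv0 hPinv1
    have e2 : (P⁻¹ • (ν.restrict S)).rnDeriv m' =ᵐ[m'] P⁻¹ • (ν.restrict S).rnDeriv m' :=
      Measure.rnDeriv_smul_left_of_ne_top (ν.restrict S) m' hPinv1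
    rw [← hνb] at e2
    filter_upwards [e1, e2, hrn1] with p h1 h2 h3
    rw [h1, Pi.smul_apply, h2, Pi.smul_apply, h3, smul_smul, inv_inv,
      ENNReal.mul_inv_cancel hP0 hP1, one_smul]
  -- positivity facts
  have hd_pos : ∀ᵐ p ∂νb, 0 < d p :=
    (Measure.rnDeriv_pos hAC).filter_mono hνb_acν.ae_le
  have hd_fin : ∀ᵐ p ∂νb, d p < ∞ :=
    ((Measure.rnDeriv_lt_top ν pr).filter_mono hAC.ae_le).filter_mono hνb_acν.ae_le
  have hνb_snd : νb.map Prod.snd = qb := by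
    rw [hνbdef, Measure.map_map measurable_snd hXY, hqbdef]
    rfl
  have hr_snd : ∀ᵐ p ∂νb, 0 < r p.2 ∧ r p.2 < ∞ := by
    have h1 : ∀ᵐ y ∂qb, 0 < r y := Measure.rnDeriv_pos hqac
    have h2 : ∀ᵐ y ∂qb, r y < ∞ := (Measure.rnDeriv_lt_top qb μY).filter_mono hqac.ae_le
    have h3 : ∀ᵐ y ∂(νb.map Prod.snd), 0 < r y ∧ r y < ∞ := by
      rw [hνb_snd]; exact h1.and h2
    have hms : MeasurableSet {y : ℝ | 0 < r y ∧ r y < ∞} := by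
      have heq : {y : ℝ | 0 < r y ∧ r y < ∞} = (r ⁻¹' {0})ᶜ ∩ (r ⁻¹' {∞})ᶜ := by
        ext y; simp [pos_iff_ne_zero, lt_top_iff_ne_top]
      rw [heq]
      exact ((hrm (measurableSet_singleton 0)).compl).inter
        ((hrm (measurableSet_singleton ∞)).compl)
    exact (ae_map_iff measurable_snd.aemeasurable hms).mp h3
  -- rewrite of the integrand
  have hinteg : ∀ᵐ p ∂νb,
      Real.log ((νb.rnDeriv (πXb.prod qb) p).toReal) = φ p - Real.log (r p.2).toReal := by
    filter_upwards [hνb_ac.ae_eq hrn2, hd_pos, hd_fin, hr_snd] with p h1 h2 h3 h4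
    rw [h1, hhdef]
    have hd0 : (d p).toReal ≠ 0 := (ENNReal.toReal_pos h2.ne' h3.ne).ne'
    have hr0 : ((r p.2).toReal) ≠ 0 := (ENNReal.toReal_pos h4.1.ne' h4.2.ne).ne'
    rw [ENNReal.toReal_mul, ENNReal.toReal_inv,
      Real.log_mul hd0 (inv_ne_zero hr0), Real.log_inv, hφdef, sub_eq_add_neg]
  have hmi : miNat μb X Y = ∫ p, Real.log ((νb.rnDeriv (πXb.prod qb) p).toReal) ∂νb := rfl
  set ψ : ℝ × ℝ → ℝ := fun p => Real.log (r p.2).toReal with hψdef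
  have hψm : Measurable ψ := Real.measurable_log.comp (hrm.comp measurable_snd).ennreal_toReal
  have hφ_s_int : Integrable φ νb := by
    rw [hνb]
    exact (hφint.restrict (s := S)).smul_measure hPinv1
  by_cases hψint : Integrable ψ νb
  case neg =>
    have hnot : ¬ Integrable (fun p => Real.log ((νb.rnDeriv (πXb.prod qb) p).toReal)) νb := by
      intro hcon
      have h1 : Integrable (fun p => φ p - ψ p) νb := hcon.congr hinteg
      have h2 : Integrable ψ νb := by
        have h3 := hφ_s_int.sub h1
        exact h3.congr (ae_of_all _ fun p => by simp)
      exact hψint h2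
    have hmi0 : miNat μb X Y = 0 := by rw [hmi]; exact integral_undef hnot
    refine ⟨?_, ?_⟩
    · rw [hmi0, mul_zero]; exact min_le_left _ _
    · rw [hmi0, mul_zero]; exact le_max_left _ _
  case pos =>
  have hsplit : miNat μb X Y = (∫ p, φ p ∂νb) - ∫ p, ψ p ∂νb := by
    rw [hmi, integral_congr_ae hinteg, integral_sub hφ_s_int hψint]
  have hIφ : ∫ p, φ p ∂νb = (P⁻¹).toReal * Dv := by
    rw [hνb, integral_smul_measure, hDdef, smul_eq_mul]
  set ℓ : ℝ → ℝ := fun y => Real.log (r y).toReal with hℓdef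
  have hℓm : Measurable ℓ := Real.measurable_log.comp hrm.ennreal_toReal
  have hIψ : ∫ p, ψ p ∂νb = ∫ y, ℓ y ∂qb := by
    rw [← hνb_snd, integral_map measurable_snd.aemeasurable hℓm.aestronglyMeasurable]
  have hJint : Integrable ℓ qb := by
    rw [← hνb_snd]
    exact (integrable_map_measure hℓm.aestronglyMeasurable measurable_snd.aemeasurable).mpr hψint
  have hr_pos_qb : ∀ᵐ y ∂qb, 0 < r y := Measure.rnDeriv_pos hqac
  have hr_fin_qb : ∀ᵐ y ∂qb, r y < ∞ := (Measure.rnDeriv_lt_top qb μY).filter_mono hqac.ae_le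
  have hrle_qb : ∀ᵐ y ∂qb, r y ≤ P⁻¹ := hrle.filter_mono hqac.ae_le
  have hJ_upper : ∫ y, ℓ y ∂qb ≤ Real.log (P⁻¹).toReal := by
    have hle : ∀ᵐ y ∂qb, ℓ y ≤ Real.log (P⁻¹).toReal := by
      filter_upwards [hr_pos_qb, hr_fin_qb, hrle_qb] with y h1 h2 h3
      exact Real.log_le_log (ENNReal.toReal_pos h1.ne' h2.ne)
        ((ENNReal.toReal_le_toReal h2.ne hPinv1).mpr h3)
    calc ∫ y, ℓ y ∂qb ≤ ∫ _, Real.log (P⁻¹).toReal ∂qb :=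
          integral_mono_ae hJint (integrable_const _) hle
      _ = Real.log (P⁻¹).toReal := by simp
  have hJ_lower : 0 ≤ ∫ y, ℓ y ∂qb := by
    set u : ℝ → ℝ := fun y => ((r y)⁻¹).toReal with hudef
    have hulint : ∫⁻ y, (r y)⁻¹ ∂qb ≤ 1 := by
      rw [← hq_eq, lintegral_withDensity_eq_lintegral_mul μY hrm (g := fun y => (r y)⁻¹) hrm.inv]
      have hle1 : ∀ y, (r * fun y => (r y)⁻¹) y ≤ 1 := by
        intro y
        simp only [Pi.mul_apply]
        rcases eq_or_ne (r y) 0 with hc | hc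
        · simp [hc]
        · rcases eq_or_ne (r y) ∞ with hc' | hc'
          · simp [hc']
          · rw [ENNReal.mul_inv_cancel hc hc']
      calc ∫⁻ y, (r * fun y => (r y)⁻¹) y ∂μY ≤ ∫⁻ _, 1 ∂μY := lintegral_mono hle1
        _ = 1 := by simp
    have hu_int : Integrable u qb :=
      integrable_toReal_of_lintegral_ne_top hrm.inv.aemeasurable
        (lt_of_le_of_lt hulint ENNReal.one_lt_top).ne
    have hinvfin : ∀ᵐ y ∂qb, (r y)⁻¹ < ∞ := by
      filter_upwards [hr_pos_qb] with y h1
      exact ENNReal.inv_lt_top.mpr h1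
    have hu_le : ∫ y, u y ∂qb ≤ 1 := by
      rw [hudef, integral_toReal (f := fun y => (r y)⁻¹) hrm.inv.aemeasurable hinvfin]
      have := ENNReal.toReal_mono (by norm_num : (1:ℝ≥0∞) ≠ ∞) hulint
      simpa using this
    have hpoint : ∀ᵐ y ∂qb, 1 - u y ≤ ℓ y := by
      filter_upwards [hr_pos_qb, hr_fin_qb] with y h1 h2
      have ht : 0 < (r y).toReal := ENNReal.toReal_pos h1.ne' h2.ne
      have hlog := Real.log_le_sub_one_of_pos (inv_pos.mpr ht)
      rw [Real.log_inv] at hlog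
      have hu : u y = ((r y).toReal)⁻¹ := by simp [hudef, ENNReal.toReal_inv]
      rw [hℓdef, hu]
      linarith
    have h1int : Integrable (fun y => 1 - u y) qb := (integrable_const 1).sub hu_int
    have hmono : ∫ y, (1 - u y) ∂qb ≤ ∫ y, ℓ y ∂qb := integral_mono_ae h1int hJint hpoint
    have hval : ∫ y, (1 - u y) ∂qb = 1 - ∫ y, u y ∂qb := by
      rw [integral_sub (integrable_const 1) hu_int]; simp
    rw [hval] at hmono
    linarith
  have hPt : (0:ℝ) < P.toReal := ENNReal.toReal_pos hP0 hP1
  have hmul : P.toReal * (P⁻¹).toReal = 1 := by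
    rw [ENNReal.toReal_inv]
    field_simp
  have hlogPinv : Real.log (P⁻¹).toReal = - Real.log P.toReal := by
    rw [ENNReal.toReal_inv, Real.log_inv]
  have hvalue : P.toReal * miNat μb X Y = Dv - P.toReal * (∫ y, ℓ y ∂qb) := by
    rw [hsplit, hIφ, hIψ, mul_sub, ← mul_assoc, hmul, one_mul]
  refine ⟨?_, ?_⟩
  · rw [hvalue]
    have h1 : P.toReal * (∫ y, ℓ y ∂qb) ≤ P.toReal * (- Real.log P.toReal) := by
      refine mul_le_mul_of_nonneg_left ?_ hPt.le
      rw [← hlogPinv]; exact hJ_upper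
    have h2 : Dv + P.toReal * Real.log P.toReal ≤ Dv - P.toReal * ∫ y, ℓ y ∂qb := by
      linarith
    exact le_trans (min_le_right _ _) h2
  · rw [hvalue]
    have h1 : 0 ≤ P.toReal * ∫ y, ℓ y ∂qb := mul_nonneg hPt.le hJ_lower
    have h2 : Dv - P.toReal * ∫ y, ℓ y ∂qb ≤ Dv := by linarith
    exact h2.trans (le_max_right _ _)

lemma auxJointAC {Ω : Type*} [MeasureSpace Ω] [IsProbabilityMeasure (ℙ : Measure Ω)]
    (X Z : Ω → ℝ) (hX : Measurable X) (hZ : Measurable Z)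
    (σ : NNReal) (hσ : 0 < σ)
    (hZlaw : Measure.map Z ℙ = gaussianReal 0 (σ ^ 2))
    (hIndep : IndepFun X Z ℙ) :
    ((ℙ : Measure Ω).map fun ω => (X ω, X ω + Z ω)) ≪
      (((ℙ : Measure Ω).map X).prod ((ℙ : Measure Ω).map fun ω => X ω + Z ω)) := by
  have hσ2 : (σ ^ 2 : ℝ≥0) ≠ 0 := pow_ne_zero _ hσ.ne'
  set γ : Measure ℝ := gaussianReal 0 (σ ^ 2) with hγ
  set μX : Measure ℝ := (ℙ : Measure Ω).map X with hμX
  haveI : IsProbabilityMeasure μX := Measure.isProbabilityMeasure_map hX.aemeasurable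
  have hXZ : (ℙ : Measure Ω).map (fun ω => (X ω, Z ω)) = μX.prod γ := by
    rw [← hZlaw]
    exact (indepFun_iff_map_prod_eq_prod_map_map hX.aemeasurable hZ.aemeasurable).mp hIndep
  have hg : Measurable fun p : ℝ × ℝ => (p.1, p.1 + p.2) :=
    measurable_fst.prodMk (measurable_fst.add measurable_snd)
  have hadd : Measurable fun p : ℝ × ℝ => p.1 + p.2 := measurable_fst.add measurable_snd
  have hν : (ℙ : Measure Ω).map (fun ω => (X ω, X ω + Z ω))
      = (μX.prod γ).map (fun p : ℝ × ℝ => (p.1, p.1 + p.2)) := by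
    rw [← hXZ, Measure.map_map hg (hX.prodMk hZ)]
    rfl
  have hY : (ℙ : Measure Ω).map (fun ω => X ω + Z ω)
      = (μX.prod γ).map (fun p : ℝ × ℝ => p.1 + p.2) := by
    rw [← hXZ, Measure.map_map hadd (hX.prodMk hZ)]
    rfl
  -- sections of gaussian
  have hsect : ∀ (x : ℝ) (s : Set ℝ), MeasurableSet s →
      γ {z : ℝ | x + z ∈ s} = gaussianReal x (σ ^ 2) s := by
    intro x s hs
    have h1 : γ {z : ℝ | x + z ∈ s} = (γ.map (x + ·)) s := by
      rw [Measure.map_apply (measurable_const_add x) hs]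
      rfl
    rw [h1, hγ, gaussianReal_map_const_add, zero_add]
  have hmeas_sect : ∀ (s : Set ℝ), MeasurableSet s →
      Measurable (fun x : ℝ => γ {z : ℝ | x + z ∈ s}) := by
    intro s hs
    exact measurable_measure_prodMk_left (hadd hs)
  refine Measure.AbsolutelyContinuous.mk fun E hE h0 => ?_
  -- marginal law of Y applied to a section
  have hμY_apply : ∀ (s : Set ℝ), MeasurableSet s →
      (ℙ : Measure Ω).map (fun ω => X ω + Z ω) s = ∫⁻ x, γ {z : ℝ | x + z ∈ s} ∂μX := by
    intro s hs
    rw [hY, Measure.map_apply hadd hs, Measure.prod_apply (hadd hs)]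
    rfl
  -- from h0 : π E = 0
  rw [Measure.prod_apply hE] at h0
  have hEx_meas : ∀ x : ℝ, MeasurableSet (Prod.mk x ⁻¹' E) := fun x => measurable_prodMk_left hE
  have h1 : ∀ᵐ x ∂μX, (ℙ : Measure Ω).map (fun ω => X ω + Z ω) (Prod.mk x ⁻¹' E) = 0 := by
    have hmeas : Measurable fun x : ℝ =>
        (ℙ : Measure Ω).map (fun ω => X ω + Z ω) (Prod.mk x ⁻¹' E) :=
      measurable_measure_prodMk_left hE
    exact (lintegral_eq_zero_iff hmeas).mp h0
  have h2 : ∀ᵐ x ∂μX, γ {z : ℝ | x + z ∈ Prod.mk x ⁻¹' E} = 0 := by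
    filter_upwards [h1] with x hx
    rw [hμY_apply _ (hEx_meas x)] at hx
    have h3 : ∀ᵐ x' ∂μX, γ {z : ℝ | x' + z ∈ Prod.mk x ⁻¹' E} = 0 :=
      (lintegral_eq_zero_iff (hmeas_sect _ (hEx_meas x))).mp hx
    haveI : Filter.NeBot (ae μX) := ae_neBot.mpr (IsProbabilityMeasure.ne_zero μX)
    obtain ⟨x', hx'⟩ := h3.exists
    -- from one gaussian null, get volume null, conclude for the gaussian centered at x
    have hvol : (volume : Measure ℝ) (Prod.mk x ⁻¹' E) = 0 := by
      apply gaussianReal_absolutelyContinuous' x' hσ2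
      rw [← hsect x' _ (hEx_meas x)]
      exact hx'
    have : gaussianReal x (σ ^ 2) (Prod.mk x ⁻¹' E) = 0 :=
      gaussianReal_absolutelyContinuous x hσ2 hvol
    rw [hsect x _ (hEx_meas x)]
    exact this
  -- conclude
  rw [hν, Measure.map_apply hg hE, Measure.prod_apply (hg hE)]
  have hmeasE : Measurable fun x : ℝ =>
      γ (Prod.mk x ⁻¹' ((fun p : ℝ × ℝ => (p.1, p.1 + p.2)) ⁻¹' E)) :=
    measurable_measure_prodMk_left (hg hE)
  rw [lintegral_eq_zero_iff hmeasE]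
  filter_upwards [h2] with x hx
  exact hx



/-- Lemma 7 (tail mutual information vanishes): for `X` a real random variable and
`Z ~ N(0, σ²)` independent of `X` with `I(X; X+Z) < ∞`,
`P(|X| > b)·I(X; X+Z | |X| > b) → 0` as `b → ∞`, where the conditional mutual information
is computed under the law conditioned on the event `{|X| > b}`. -/
theorem tail_mutual_information_vanishes
    {Ω : Type*} [MeasureSpace Ω] [IsProbabilityMeasure (ℙ : Measure Ω)]
    (X Z : Ω → ℝ) (hX : Measurable X) (hZ : Measurable Z)
    (σ : NNReal) (hσ : 0 < σ)
    (hZlaw : Measure.map Z ℙ = gaussianReal 0 (σ ^ 2))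
    (hIndep : IndepFun X Z ℙ)
    (hFin : Integrable
      (fun p => Real.log
        ((((ℙ : Measure Ω).map fun ω => (X ω, X ω + Z ω)).rnDeriv
          (((ℙ : Measure Ω).map X).prod ((ℙ : Measure Ω).map fun ω => X ω + Z ω)) p).toReal))
      ((ℙ : Measure Ω).map fun ω => (X ω, X ω + Z ω))) :
    Filter.Tendsto
      (fun b : ℝ =>
        (ℙ {ω | b < |X ω|}).toReal *
          miNat (ℙ[|{ω | b < |X ω|}]) X (fun ω => X ω + Z ω))
      Filter.atTop (nhds 0) := by
  have hY : Measurable fun ω : Ω => X ω + Z ω := hX.add hZ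
  have hXY : Measurable fun ω : Ω => (X ω, X ω + Z ω) := hX.prodMk hY
  have hAC := auxJointAC X Z hX hZ σ hσ hZlaw hIndep
  set ν : Measure (ℝ × ℝ) := (ℙ : Measure Ω).map (fun ω => (X ω, X ω + Z ω)) with hνdef
  haveI : IsProbabilityMeasure ν := Measure.isProbabilityMeasure_map hXY.aemeasurable
  set pr : Measure (ℝ × ℝ) :=
    ((ℙ : Measure Ω).map X).prod ((ℙ : Measure Ω).map fun ω => X ω + Z ω) with hprdef
  set φ : ℝ × ℝ → ℝ := fun p => Real.log (ν.rnDeriv pr p).toReal with hφdef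
  have hφm : Measurable φ :=
    Real.measurable_log.comp (Measure.measurable_rnDeriv ν pr).ennreal_toReal
  have hφint : Integrable φ ν := hFin
  have hT : ∀ b : ℝ, MeasurableSet {x : ℝ | b < |x|} := fun b =>
    measurableSet_lt measurable_const continuous_abs.measurable
  set D : ℝ → ℝ := fun b => ∫ p in ({x : ℝ | b < |x|} ×ˢ (Set.univ : Set ℝ)), φ p ∂ν with hDdef
  have key : ∀ b : ℝ,
      min 0 (D b + (ℙ {ω | b < |X ω|}).toReal * Real.log (ℙ {ω | b < |X ω|}).toReal)
        ≤ (ℙ {ω | b < |X ω|}).toReal * miNat (ℙ[|{ω | b < |X ω|}]) X (fun ω => X ω + Z ω)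
      ∧ (ℙ {ω | b < |X ω|}).toReal * miNat (ℙ[|{ω | b < |X ω|}]) X (fun ω => X ω + Z ω)
        ≤ max 0 (D b) := fun b =>
    auxKey X (fun ω => X ω + Z ω) hX hY hAC hφint (hT b)
  have hDlim : Filter.Tendsto D Filter.atTop (nhds 0) := by
    have h0 : Filter.Tendsto
        (fun b : ℝ => ∫ p,
          Set.indicator ({x : ℝ | b < |x|} ×ˢ (Set.univ : Set ℝ)) φ p ∂ν)
        Filter.atTop (nhds (∫ _, (0:ℝ) ∂ν)) := by
      refine tendsto_integral_filter_of_dominated_convergence (fun p => ‖φ p‖) ?_ ?_ ?_ ?_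
      · exact Filter.Eventually.of_forall fun b =>
          (hφm.indicator ((hT b).prod MeasurableSet.univ)).aestronglyMeasurable
      · exact Filter.Eventually.of_forall fun b => ae_of_all _ fun p =>
          norm_indicator_le_norm_self _ _
      · exact hφint.norm
      · refine ae_of_all _ fun p => ?_
        have hev : ∀ᶠ b in Filter.atTop,
            Set.indicator ({x : ℝ | b < |x|} ×ˢ (Set.univ : Set ℝ)) φ p = 0 := by
          filter_upwards [Filter.eventually_ge_atTop |p.1|] with b hb
          refine Set.indicator_of_notMem ?_ _
          rintro ⟨h1, -⟩
          exact absurd h1 (not_lt.mpr hb)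
        exact Filter.Tendsto.congr' (hev.mono fun b hb => hb.symm) tendsto_const_nhds
    simp only [integral_zero] at h0
    refine Filter.Tendsto.congr (fun b => ?_) h0
    exact integral_indicator ((hT b).prod MeasurableSet.univ)
  have hPlim : Filter.Tendsto (fun b : ℝ => (ℙ {ω | b < |X ω|}).toReal)
      Filter.atTop (nhds 0) := by
    have h0 : Filter.Tendsto
        (fun b : ℝ => ∫ ω, Set.indicator {ω | b < |X ω|} (1 : Ω → ℝ) ω ∂(ℙ : Measure Ω))
        Filter.atTop (nhds (∫ _, (0:ℝ) ∂(ℙ : Measure Ω))) := by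
      refine tendsto_integral_filter_of_dominated_convergence (fun _ => (1:ℝ)) ?_ ?_ ?_ ?_
      · exact Filter.Eventually.of_forall fun b =>
          (measurable_one.indicator (hX (hT b))).aestronglyMeasurable
      · refine Filter.Eventually.of_forall fun b => ae_of_all _ fun ω => ?_
        calc ‖Set.indicator {ω | b < |X ω|} (1 : Ω → ℝ) ω‖
            ≤ ‖(1 : Ω → ℝ) ω‖ := norm_indicator_le_norm_self _ _
          _ = 1 := by simp
      · exact integrable_const 1
      · refine ae_of_all _ fun ω => ?_
        have hev : ∀ᶠ b in Filter.atTop,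
            Set.indicator {ω | b < |X ω|} (1 : Ω → ℝ) ω = 0 := by
          filter_upwards [Filter.eventually_ge_atTop |X ω|] with b hb
          refine Set.indicator_of_notMem ?_ _
          exact fun h1 => absurd h1 (not_lt.mpr hb)
        exact Filter.Tendsto.congr' (hev.mono fun b hb => hb.symm) tendsto_const_nhds
    simp only [integral_zero] at h0
    refine Filter.Tendsto.congr (fun b => ?_) h0
    exact integral_indicator_one (hX (hT b))
  have hPlog : Filter.Tendsto
      (fun b : ℝ => (ℙ {ω | b < |X ω|}).toReal * Real.log (ℙ {ω | b < |X ω|}).toReal)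
      Filter.atTop (nhds 0) := by
    have := (Real.continuous_mul_log.tendsto 0).comp hPlim
    simpa [Function.comp_def] using this
  have hlow : Filter.Tendsto
      (fun b : ℝ => min 0 (D b + (ℙ {ω | b < |X ω|}).toReal *
        Real.log (ℙ {ω | b < |X ω|}).toReal)) Filter.atTop (nhds 0) := by
    have := (tendsto_const_nhds (x := (0:ℝ)) (f := Filter.atTop (α := ℝ))).min (hDlim.add hPlog)
    simpa using this
  have hup : Filter.Tendsto (fun b : ℝ => max 0 (D b)) Filter.atTop (nhds 0) := by
    have := (tendsto_const_nhds (x := (0:ℝ)) (f := Filter.atTop (α := ℝ))).max hDlim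
    simpa using this
  exact tendsto_of_tendsto_of_tendsto_of_le_of_le hlow hup
    (fun b => (key b).1) (fun b => (key b).2)
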